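/- Let p be an odd prime and let f : (ZMod p)^n → ℂ be a Boolean function (f(x) ∈ {−1,1} for all x) with spectral norm ‖f̂‖₁ = 1. Then f is constant: f = 1 or f = −1. -/

import Mathlib

/-- `ω = exp(2πi/p)`, a primitive `p`-th root of unity. -/
noncomputable def pomega (p : ℕ) : ℂ :=
  Complex.exp (2 * Real.pi * Complex.I / p)

/-- The character `χ_α(x) = ω^{⟨α,x⟩}` on `(ZMod p)^n` (well-defined via `ZMod.val`
since `ω^p = 1`). -/
noncomputable def pchi (p n : ℕ) (α x : Fin n → ZMod p) : ℂ :=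
  pomega p ^ (∑ i, α i * x i : ZMod p).val

/-- The Fourier coefficient `f̂(α) = p^{-n} ∑_x f(x) conj(χ_α(x))`. -/
noncomputable def phat (p n : ℕ) [NeZero p] (f : (Fin n → ZMod p) → ℂ)
    (α : Fin n → ZMod p) : ℂ :=
  ((p : ℂ) ^ n)⁻¹ * ∑ x : Fin n → ZMod p, f x * (starRingEnd ℂ) (pchi p n α x)

lemma pomega_pow (p : ℕ) [NeZero p] : pomega p ^ p = 1 :=
  (Complex.isPrimitiveRoot_exp p (NeZero.ne p)).pow_eq_one

lemma pomega_abs (p : ℕ) : ‖pomega p‖ = 1 := by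
  simp [pomega, Complex.norm_exp]

/-- The additive character `a ↦ ω^{a.val}` on `ZMod p`. -/
noncomputable def ppsi (p : ℕ) [NeZero p] : AddChar (ZMod p) ℂ :=
  AddChar.zmodChar p (pomega_pow p)

lemma ppsi_abs (p : ℕ) [NeZero p] (a : ZMod p) : ‖ppsi p a‖ = 1 := by
  rw [ppsi, AddChar.zmodChar_apply, norm_pow, pomega_abs, one_pow]

lemma ppsi_conj (p : ℕ) [NeZero p] (a : ZMod p) :
    (starRingEnd ℂ) (ppsi p a) = ppsi p (-a) := by
  rw [AddChar.map_neg_eq_inv]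
  rw [Complex.inv_def, Complex.normSq_eq_norm_sq, ppsi_abs]
  simp

lemma pchi_eq (p n : ℕ) [NeZero p] (α x : Fin n → ZMod p) :
    pchi p n α x = ppsi p (∑ i, α i * x i) := by
  rw [ppsi, AddChar.zmodChar_apply, pchi]

lemma ppsi_prim (p : ℕ) [NeZero p] : (ppsi p).IsPrimitive :=
  AddChar.zmodChar_primitive_of_primitive_root p (Complex.isPrimitiveRoot_exp p (NeZero.ne p))

lemma sum_ppsi_mul {p : ℕ} [NeZero p] {c : ZMod p} (hc : c ≠ 0) :
    ∑ a : ZMod p, ppsi p (a * c) = 0 := by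
  have h := AddChar.sum_eq_zero_of_ne_one (ppsi_prim p hc)
  simpa [AddChar.mulShift_apply, mul_comm] using h

lemma addchar_map_sum {A M : Type*} [AddCommMonoid A] [CommMonoid M] (ψ : AddChar A M)
    {ι : Type*} (s : Finset ι) (g : ι → A) :
    ψ (∑ i ∈ s, g i) = ∏ i ∈ s, ψ (g i) := by
  classical
  induction s using Finset.cons_induction with
  | empty => simp
  | cons i s hi ih => rw [Finset.sum_cons, Finset.prod_cons, AddChar.map_add_eq_mul, ih]

lemma sum_ppsi_pi {p n : ℕ} [NeZero p] (y : Fin n → ZMod p) :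
    ∑ α : Fin n → ZMod p, ppsi p (∑ i, α i * y i) =
      if y = 0 then (p : ℂ) ^ n else 0 := by
  have hmap : ∀ α : Fin n → ZMod p, ppsi p (∑ i, α i * y i) = ∏ i, ppsi p (α i * y i) := by
    intro α; exact addchar_map_sum (ppsi p) _ _
  simp_rw [hmap]
  rw [← Fintype.prod_sum fun i a => ppsi p (a * y i)]
  by_cases hy : y = 0
  · subst hy; simp [Finset.card_univ]
  · have : ∃ i, y i ≠ 0 := by
      by_contra h; push_neg at h; exact hy (funext h)
    obtain ⟨i, hi⟩ := this
    rw [if_neg hy]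
    apply Finset.prod_eq_zero (Finset.mem_univ i)
    exact sum_ppsi_mul hi

/-- Fourier inversion. -/
lemma phat_inversion (p n : ℕ) [NeZero p] (f : (Fin n → ZMod p) → ℂ)
    (x₀ : Fin n → ZMod p) :
    ∑ α : Fin n → ZMod p, phat p n f α * pchi p n α x₀ = f x₀ := by
  have hpn : ((p : ℂ) ^ n) ≠ 0 := by
    exact pow_ne_zero _ (Nat.cast_ne_zero.mpr (NeZero.ne p))
  calc ∑ α : Fin n → ZMod p, phat p n f α * pchi p n α x₀
      = ((p : ℂ) ^ n)⁻¹ * ∑ α : Fin n → ZMod p, ∑ x : Fin n → ZMod p,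
          f x * ((starRingEnd ℂ) (pchi p n α x) * pchi p n α x₀) := by
        rw [Finset.mul_sum]
        refine Finset.sum_congr rfl fun α _ => ?_
        rw [phat, mul_assoc, Finset.sum_mul]
        congr 1
        exact Finset.sum_congr rfl fun x _ => by ring
    _ = ((p : ℂ) ^ n)⁻¹ * ∑ x : Fin n → ZMod p,
          f x * ∑ α : Fin n → ZMod p, ppsi p (∑ i, α i * (x₀ i - x i)) := by
        rw [Finset.sum_comm]
        congr 1
        refine Finset.sum_congr rfl fun x _ => ?_
        rw [Finset.mul_sum]
        refine Finset.sum_congr rfl fun α _ => ?_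
        congr 1
        rw [pchi_eq, pchi_eq, ppsi_conj, ← AddChar.map_add_eq_mul]
        congr 1
        simp only [mul_sub, Finset.sum_sub_distrib]
        ring
    _ = f x₀ := by
        have key : ∀ x : Fin n → ZMod p,
            (∑ α : Fin n → ZMod p, ppsi p (∑ i, α i * (x₀ i - x i))) =
              if x = x₀ then (p : ℂ) ^ n else 0 := by
          intro x
          have hcond : ((fun i => x₀ i - x i) = 0) ↔ x = x₀ := by
            constructor
            · intro h
              funext i
              have h2 := congrFun h i
              simp only [Pi.zero_apply, sub_eq_zero] at h2
              exact h2.symm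
            · intro h; subst h; funext i; simp
          rw [sum_ppsi_pi (fun i => x₀ i - x i)]
          simp [hcond]
        simp_rw [key]
        rw [Finset.sum_congr rfl (fun x _ => mul_ite (x = x₀) (f x) ((p:ℂ)^n) 0)]
        simp only [mul_zero]
        rw [Finset.sum_ite_eq' Finset.univ x₀ (fun x => f x * (p:ℂ)^n)]
        simp only [Finset.mem_univ, if_true]
        field_simp

open scoped ComplexOrder in
/-- Equality in the triangle inequality. -/
lemma triangle_eq {ι : Type*} [Fintype ι] (z : ι → ℂ) (S : ℂ)
    (hS : ∑ i, z i = S) (habs : ‖S‖ = 1)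
    (hsum : ∑ i, ‖z i‖ = 1) (i : ι) :
    z i = (‖z i‖ : ℂ) * S := by
  set w : ι → ℂ := fun j => z j * (starRingEnd ℂ) S with hw
  have hle : ∀ j, (w j).re ≤ ‖z j‖ := by
    intro j
    calc (w j).re ≤ ‖w j‖ := Complex.re_le_norm _
      _ = ‖z j‖ := by rw [hw]; simp [map_mul, habs]
  have hsumw : ∑ j, (w j).re = 1 := by
    have : (∑ j, w j) = S * (starRingEnd ℂ) S := by
      rw [hw, ← Finset.sum_mul, hS]
    calc ∑ j, (w j).re = (∑ j, w j).re := (Complex.re_sum _ _).symm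
      _ = (S * (starRingEnd ℂ) S).re := by rw [this]
      _ = 1 := by
          rw [Complex.mul_conj, Complex.normSq_eq_norm_sq, habs]
          norm_num
  have hzero : ∀ j ∈ Finset.univ, ‖z j‖ - (w j).re = 0 := by
    have h1 : ∑ j, (‖z j‖ - (w j).re) = 0 := by
      rw [Finset.sum_sub_distrib, hsum, hsumw, sub_self]
    intro j _
    have := (Finset.sum_eq_zero_iff_of_nonneg
      (fun j _ => sub_nonneg.mpr (hle j))).mp h1 j (Finset.mem_univ j)
    exact this
  have hre : (w i).re = ‖w i‖ := by
    have h1 := hzero i (Finset.mem_univ i)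
    have h2 : ‖w i‖ = ‖z i‖ := by
      rw [hw]; simp [map_mul, habs]
    have h1 := hzero i (Finset.mem_univ i)
    rw [h2]; linarith
  have hpos : 0 ≤ w i := Complex.re_eq_norm.mp hre
  have hwr : w i = (‖z i‖ : ℂ) := by
    have him : (w i).im = 0 := by
      have := (Complex.le_def.mp hpos).2
      simpa using this.symm
    have h2 : ‖w i‖ = ‖z i‖ := by
      rw [hw]; simp [map_mul, habs]
    apply Complex.ext
    · simp [hre, h2]
    · simp [him]
  have hSS : (starRingEnd ℂ) S * S = 1 := by
    rw [mul_comm, Complex.mul_conj, Complex.normSq_eq_norm_sq, habs]; norm_num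
  calc z i = z i * ((starRingEnd ℂ) S * S) := by rw [hSS, mul_one]
    _ = w i * S := by rw [hw]; ring
    _ = (‖z i‖ : ℂ) * S := by rw [hwr]

/-- **Lemma 4.2**: a Boolean function `f : (ZMod p)^n → {−1,1}`, `p` an odd prime,
with spectral norm exactly `1` is constant (`f = 1` or `f = -1`). -/
theorem p_spectral_norm_one {p n : ℕ} [Fact p.Prime] (hp2 : p ≠ 2)
    (f : (Fin n → ZMod p) → ℂ) (hf : ∀ x, f x = 1 ∨ f x = -1)
    (hA : ∑ α : Fin n → ZMod p, ‖phat p n f α‖ = 1) :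
    (∀ x, f x = 1) ∨ (∀ x, f x = -1) := by
  have hD : ∀ x, ‖f x‖ = 1 := fun x => by rcases hf x with h | h <;> simp [h]
  have hex : ∃ α₀, phat p n f α₀ ≠ 0 := by
    by_contra h
    push_neg at h
    rw [Finset.sum_eq_zero (fun α _ => by rw [h α]; simp)] at hA
    norm_num at hA
  obtain ⟨α₀, hα₀⟩ := hex
  have key : ∀ x, phat p n f α₀ * pchi p n α₀ x =
      (‖phat p n f α₀‖ : ℂ) * f x := by
    intro x
    have hS := phat_inversion p n f x
    have hsum : ∑ α : Fin n → ZMod p, ‖phat p n f α * pchi p n α x‖ = 1 := by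
      simp_rw [norm_mul, pchi_eq, ppsi_abs, mul_one]
      exact hA
    have h := triangle_eq (fun α => phat p n f α * pchi p n α x) (f x) hS (hD x) hsum α₀
    simpa [map_mul, pchi_eq, ppsi_abs] using h
  have hchi0 : pchi p n α₀ 0 = 1 := by
    rw [pchi_eq]
    simp
  have h0 : phat p n f α₀ = (‖phat p n f α₀‖ : ℂ) * f 0 := by
    have := key 0
    rwa [hchi0, mul_one] at this
  have hab : (‖phat p n f α₀‖ : ℂ) ≠ 0 := by
    simpa using hα₀
  have hodd : Odd p := (Fact.out : p.Prime).odd_of_ne_two hp2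
  have hconst : ∀ x, f x = f 0 := by
    intro x
    have hk := key x
    nth_rewrite 1 [h0] at hk
    have h1 : f 0 * pchi p n α₀ x = f x := by
      apply mul_left_cancel₀ hab
      rw [← hk]; ring
    have hchi : pchi p n α₀ x = f 0 * f x := by
      have hff : f 0 * f 0 = 1 := by rcases hf 0 with h | h <;> rw [h] <;> norm_num
      calc pchi p n α₀ x = (f 0 * f 0) * pchi p n α₀ x := by rw [hff, one_mul]
        _ = f 0 * (f 0 * pchi p n α₀ x) := by ring
        _ = f 0 * f x := by rw [h1]
    have hchip : pchi p n α₀ x ^ p = 1 := by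
      rw [pchi, ← pow_mul, mul_comm, pow_mul, pomega_pow, one_pow]
    rw [hchi] at hchip
    rcases hf 0 with ha | ha <;> rcases hf x with hb | hb <;> rw [ha, hb] <;>
      rw [ha, hb] at hchip <;> norm_num at hchip ⊢
    · exact absurd hchip (by rw [hodd.neg_one_pow]; norm_num)
    · exact absurd hchip (by rw [hodd.neg_one_pow]; norm_num)
  rcases hf 0 with h | h
  · left; intro x; rw [hconst x, h]
  · right; intro x; rw [hconst x, h]
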